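/- Let d be a metric on ℕ satisfying the summability condition, γ > 0, and let M ∈ J(d,γ) induce a bounded operator on ℓ² which is elliptic with constant C_ell > 0. Then every finite section M_n := (M_{ij})_{1 ≤ i,j ≤ n} is invertible, the matrix M̄ defined by M̄_{ij} := sup_{n ≥ max{i,j}} |(M_n⁻¹)_{ij}| has finite entries, and there exists γ̃ > 0 (depending only on C_ell, d and γ) such that M̄ ∈ J(d, γ̃); in particular M̄ induces a bounded operator on ℓ². -/

import Mathlib

abbrev Mat := ℕ → ℕ → ℝ

noncomputable def mulVec (M : Mat) (x : ℕ → ℝ) : ℕ → ℝ := fun i => ∑' j, M i j * x j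

def Memℓ2 (x : ℕ → ℝ) : Prop := Summable fun i => x i ^ 2

noncomputable def l2norm (x : ℕ → ℝ) : ℝ := Real.sqrt (∑' i, x i ^ 2)

def BoundedWith (M : Mat) (K : ℝ) : Prop :=
  ∀ x : ℕ → ℝ, Memℓ2 x →
    (∀ i, Summable fun j => |M i j * x j|) ∧ Memℓ2 (mulVec M x) ∧
      l2norm (mulVec M x) ≤ K * l2norm x

def IsBoundedOp (M : Mat) : Prop := ∃ K : ℝ, 0 ≤ K ∧ BoundedWith M K

/-- Ellipticity: `⟨Mx,x⟩ ≥ c‖x‖²` for all `x ∈ ℓ²`. -/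
def Elliptic (M : Mat) (c : ℝ) : Prop :=
  ∀ x : ℕ → ℝ, Memℓ2 x → c * (∑' i, x i ^ 2) ≤ ∑' i, mulVec M x i * x i

def IsMetric (d : ℕ → ℕ → ℝ) : Prop :=
  (∀ i j, 0 ≤ d i j) ∧ (∀ i j, d i j = 0 ↔ i = j) ∧ (∀ i j, d i j = d j i) ∧
    ∀ i j k, d i k ≤ d i j + d j k

def SummCond (d : ℕ → ℕ → ℝ) : Prop :=
  ∀ ε : ℝ, 0 < ε → ∃ S : ℝ, ∀ i,
    (Summable fun j => Real.exp (-ε * d i j)) ∧ (∑' j, Real.exp (-ε * d i j)) ≤ S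

def Jaffard (d : ℕ → ℕ → ℝ) (γ : ℝ) (M : Mat) : Prop :=
  ∀ γ' : ℝ, 0 < γ' → γ' < γ → ∃ C : ℝ, 0 < C ∧ ∀ i j, |M i j| ≤ C * Real.exp (-γ' * d i j)

/-- The finite section `(M_{ij})_{i,j < N}` of an infinite matrix. -/
def sect (M : Mat) (N : ℕ) : Matrix (Fin N) (Fin N) ℝ := Matrix.of fun i j => M i j

/-- `M̄_{ij} := sup_{n > max{i,j}} |(M_n⁻¹)_{ij}|` (finite sections indexed so that
`i, j` are valid indices). -/
noncomputable def Mbar (M : Mat) : Mat := fun i j =>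
  ⨆ k : {m : ℕ // max i j < m},
    |(sect M k.1)⁻¹ ⟨i, lt_of_le_of_lt (le_max_left i j) k.2⟩
        ⟨j, lt_of_le_of_lt (le_max_right i j) k.2⟩|


noncomputable def JLq (c K : ℝ) : ℝ := Real.sqrt (1 - c ^ 2 / K ^ 2)
noncomputable def JLE (c K C S : ℝ) : ℝ := max ((1 + c / K ^ 2 * C) * S) 1
noncomputable def JLθ (c K C S : ℝ) : ℝ :=
  -Real.log (JLq c K) / (2 * (Real.log (JLE c K C S) - Real.log (JLq c K)))
noncomputable def JLρ (c K C S : ℝ) : ℝ :=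
  JLq c K ^ (1 - JLθ c K C S) * JLE c K C S ^ JLθ c K C S
noncomputable def JLCs (c K C S : ℝ) : ℝ := (c / K ^ 2) / (1 - JLρ c K C S)
noncomputable def JLγ (c K C S α : ℝ) : ℝ := JLθ c K C S * (α / 2)

lemma JL_props {c K C S : ℝ} (hc : 0 < c) (hcK : c < K) (hC : 0 < C) (hS : 1 ≤ S) :
    0 < JLq c K ∧ JLq c K < 1 ∧ JLq c K ^ 2 = 1 - c ^ 2 / K ^ 2 ∧
    1 ≤ JLE c K C S ∧ 0 < JLθ c K C S ∧ JLθ c K C S ≤ 1 ∧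
    0 < JLρ c K C S ∧ JLρ c K C S < 1 ∧ 0 < JLCs c K C S := by
  have hK : 0 < K := hc.trans hcK
  have hq2pos : 0 < 1 - c ^ 2 / K ^ 2 := by
    have h1 : c ^ 2 < K ^ 2 := by nlinarith
    have h2 : c ^ 2 / K ^ 2 < 1 := (div_lt_one (by positivity)).mpr h1
    linarith
  have hq2lt : 1 - c ^ 2 / K ^ 2 < 1 := by
    have : 0 < c ^ 2 / K ^ 2 := by positivity
    linarith
  have hq0 : 0 < JLq c K := Real.sqrt_pos.mpr hq2pos
  have hq1 : JLq c K < 1 := by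
    rw [show (1 : ℝ) = Real.sqrt 1 by simp [Real.sqrt_one]]
    exact Real.sqrt_lt_sqrt (le_of_lt hq2pos) hq2lt
  have hqsq : JLq c K ^ 2 = 1 - c ^ 2 / K ^ 2 := Real.sq_sqrt (le_of_lt hq2pos)
  have hE1 : 1 ≤ JLE c K C S := le_max_right _ _
  have hE0 : 0 < JLE c K C S := lt_of_lt_of_le one_pos hE1
  have hlogq : Real.log (JLq c K) < 0 := Real.log_neg hq0 hq1
  have hlogE : 0 ≤ Real.log (JLE c K C S) := Real.log_nonneg hE1
  have hden : 0 < Real.log (JLE c K C S) - Real.log (JLq c K) := by linarith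
  have hθpos : 0 < JLθ c K C S := div_pos (by linarith) (by linarith)
  have hθle : JLθ c K C S ≤ 1 := by
    rw [JLθ, div_le_one (by linarith)]
    linarith
  have hρpos : 0 < JLρ c K C S :=
    mul_pos (Real.rpow_pos_of_pos hq0 _) (Real.rpow_pos_of_pos hE0 _)
  have hρlt : JLρ c K C S < 1 := by
    have hlogρ : Real.log (JLρ c K C S) =
        (1 - JLθ c K C S) * Real.log (JLq c K) + JLθ c K C S * Real.log (JLE c K C S) := by
      rw [JLρ, Real.log_mul (ne_of_gt (Real.rpow_pos_of_pos hq0 _))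
        (ne_of_gt (Real.rpow_pos_of_pos hE0 _)), Real.log_rpow hq0, Real.log_rpow hE0]
    have hθval : JLθ c K C S * (Real.log (JLE c K C S) - Real.log (JLq c K)) =
        -Real.log (JLq c K) / 2 := by
      rw [JLθ]; field_simp
    have hlogρ' : Real.log (JLρ c K C S) = Real.log (JLq c K) / 2 := by
      rw [hlogρ]; nlinarith [hθval]
    have : Real.log (JLρ c K C S) < 0 := by rw [hlogρ']; linarith
    calc JLρ c K C S = Real.exp (Real.log (JLρ c K C S)) := (Real.exp_log hρpos).symm
      _ < Real.exp 0 := Real.exp_lt_exp.mpr this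
      _ = 1 := Real.exp_zero
  refine ⟨hq0, hq1, hqsq, hE1, hθpos, hθle, hρpos, hρlt, ?_⟩
  exact div_pos (by positivity) (by linarith)

/-- Interpolation: two bounds on `|x|` give a product bound. -/
lemma interp_bound {x a b θ : ℝ} (ha : 0 ≤ a) (hb : 0 ≤ b) (hθ0 : 0 ≤ θ) (hθ1 : θ ≤ 1)
    (h1 : |x| ≤ a) (h2 : |x| ≤ b) : |x| ≤ a ^ (1 - θ) * b ^ θ := by
  rcases eq_or_lt_of_le (abs_nonneg x) with h0 | h0
  · have : (0:ℝ) ≤ a ^ (1 - θ) * b ^ θ := by positivity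
    linarith [h0.symm.le]
  · calc |x| = |x| ^ ((1 - θ) + θ) := by norm_num
      _ = |x| ^ (1 - θ) * |x| ^ θ := Real.rpow_add h0 _ _
      _ ≤ a ^ (1 - θ) * b ^ θ :=
        mul_le_mul (Real.rpow_le_rpow (abs_nonneg x) h1 (by linarith))
          (Real.rpow_le_rpow (abs_nonneg x) h2 hθ0)
          (Real.rpow_nonneg (abs_nonneg x) _) (Real.rpow_nonneg ha _)

lemma pow_rpow_comm {x : ℝ} (hx : 0 ≤ x) (n : ℕ) (θ : ℝ) :
    (x ^ n) ^ θ = (x ^ θ) ^ n := by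
  rw [← Real.rpow_natCast x n, ← Real.rpow_mul hx, mul_comm,
    Real.rpow_mul hx, Real.rpow_natCast]

set_option maxHeartbeats 1000000 in
lemma finmat_inv_bound {N : ℕ} (A : Matrix (Fin N) (Fin N) ℝ)
    (dd : Fin N → Fin N → ℝ) (c K C S α : ℝ)
    (hc : 0 < c) (hcK : c < K) (hC : 0 < C) (hα : 0 < α) (hS : 1 ≤ S)
    (hdd0 : ∀ i j, 0 ≤ dd i j) (hdddiag : ∀ i, dd i i = 0)
    (htri : ∀ i j k, dd i j ≤ dd i k + dd k j)
    (hell : ∀ x : Fin N → ℝ, c * ∑ i, x i ^ 2 ≤ ∑ i, (A.mulVec x) i * x i)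
    (hKb : ∀ x : Fin N → ℝ, ∑ i, (A.mulVec x) i ^ 2 ≤ K ^ 2 * ∑ i, x i ^ 2)
    (hA : ∀ i j, |A i j| ≤ C * Real.exp (-α * dd i j))
    (hrow : ∀ i, ∑ k, Real.exp (-(α / 2) * dd i k) ≤ S) :
    IsUnit A ∧ ∀ i j, |A⁻¹ i j| ≤ JLCs c K C S * Real.exp (-(JLγ c K C S α) * dd i j) := by
  obtain ⟨hq0, hq1, hqsq, hE1, hθpos, hθle, hρpos, hρlt, hCspos⟩ := JL_props hc hcK hC hS
  have hK : 0 < K := hc.trans hcK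
  set q : ℝ := JLq c K with hqdef
  set E : ℝ := JLE c K C S with hEdef
  set θ : ℝ := JLθ c K C S with hθdef
  set ρ : ℝ := JLρ c K C S with hρdef
  set t : ℝ := c / K ^ 2 with htdef
  have ht : 0 < t := by positivity
  -- lower bound : c² ∑ x² ≤ ∑ (Ax)²
  have hlow : ∀ x : Fin N → ℝ, c ^ 2 * ∑ i, x i ^ 2 ≤ ∑ i, (A.mulVec x) i ^ 2 := by
    intro x
    have hcs := Finset.sum_mul_sq_le_sq_mul_sq Finset.univ (fun i => (A.mulVec x) i) x
    have h1 := hell x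
    have hx0 : (0:ℝ) ≤ ∑ i, x i ^ 2 := Finset.sum_nonneg fun i _ => sq_nonneg _
    have hAx0 : (0:ℝ) ≤ ∑ i, (A.mulVec x) i ^ 2 := Finset.sum_nonneg fun i _ => sq_nonneg _
    have hcx : (0:ℝ) ≤ c * ∑ i, x i ^ 2 := mul_nonneg hc.le hx0
    rcases eq_or_lt_of_le hx0 with h | h
    · rw [← h]; simpa using hAx0
    · have h2 : (c * ∑ i, x i ^ 2) ^ 2 ≤ (∑ i, (A.mulVec x) i ^ 2) * ∑ i, x i ^ 2 :=
        le_trans (sq_le_sq' (by linarith) h1) hcs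
      have h3 : (c ^ 2 * ∑ i, x i ^ 2) * (∑ i, x i ^ 2) ≤ (∑ i, (A.mulVec x) i ^ 2) * ∑ i, x i ^ 2 := by
        nlinarith [h2]
      exact (mul_le_mul_iff_of_pos_right h).mp h3
  -- injectivity and invertibility
  have hinj : Function.Injective A.mulVec := by
    intro x y hxy
    have hz : A.mulVec (x - y) = 0 := by rw [Matrix.mulVec_sub, hxy, sub_self]
    have h0 := hlow (x - y)
    rw [hz] at h0
    simp only [Pi.zero_apply, ne_eq, OfNat.ofNat_ne_zero, not_false_eq_true, zero_pow,
      Finset.sum_const_zero] at h0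
    have hx0 : (0:ℝ) ≤ ∑ i, (x - y) i ^ 2 := Finset.sum_nonneg fun i _ => sq_nonneg _
    have hsum0 : ∑ i, (x - y) i ^ 2 = 0 := by nlinarith [pow_pos hc 2]
    funext i
    have := (Finset.sum_eq_zero_iff_of_nonneg (fun i _ => sq_nonneg ((x - y) i))).mp hsum0 i
      (Finset.mem_univ i)
    have hz0 : x i - y i = 0 := by
      have := pow_eq_zero_iff (two_ne_zero) |>.mp this
      simpa using this
    linarith [hz0]
  have hunit : IsUnit A := Matrix.mulVec_injective_iff_isUnit.mp hinj
  refine ⟨hunit, ?_⟩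
  have hdet : IsUnit A.det := (Matrix.isUnit_iff_isUnit_det A).mp hunit
  set B : Matrix (Fin N) (Fin N) ℝ := 1 - t • A with hBdef
  -- B *ᵥ x = x - t • (A *ᵥ x)
  have hBmul : ∀ x : Fin N → ℝ, B.mulVec x = x - t • A.mulVec x := by
    intro x
    rw [hBdef, Matrix.sub_mulVec, Matrix.one_mulVec, Matrix.smul_mulVec]
  -- norm contraction for B
  have hq2 : q ^ 2 = 1 - c ^ 2 / K ^ 2 := hqsq
  have hBnorm : ∀ x : Fin N → ℝ, ∑ i, (B.mulVec x) i ^ 2 ≤ q ^ 2 * ∑ i, x i ^ 2 := by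
    intro x
    have hexp : ∑ i, (B.mulVec x) i ^ 2 =
        (∑ i, x i ^ 2) - 2 * t * (∑ i, (A.mulVec x) i * x i) + t ^ 2 * ∑ i, (A.mulVec x) i ^ 2 := by
      rw [hBmul x]
      have : ∀ i : Fin N, (x - t • A.mulVec x) i ^ 2 =
          x i ^ 2 - 2 * t * ((A.mulVec x) i * x i) + t ^ 2 * (A.mulVec x) i ^ 2 := by
        intro i; simp only [Pi.sub_apply, Pi.smul_apply, smul_eq_mul]; ring
      rw [Finset.sum_congr rfl fun i _ => this i]
      rw [Finset.sum_add_distrib, Finset.sum_sub_distrib, ← Finset.mul_sum, ← Finset.mul_sum]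
    have h1 := hell x
    have h2 := hKb x
    have hKne : (K:ℝ) ^ 2 ≠ 0 := by positivity
    have htval : t = c / K ^ 2 := htdef
    rw [hexp, hq2]
    have hts : t ^ 2 * ∑ i, (A.mulVec x) i ^ 2 ≤ t ^ 2 * (K ^ 2 * ∑ i, x i ^ 2) := by
      apply mul_le_mul_of_nonneg_left h2 (by positivity)
    have hmid : -(2 * t * (∑ i, (A.mulVec x) i * x i)) ≤ -(2 * t * (c * ∑ i, x i ^ 2)) := by
      have := mul_le_mul_of_nonneg_left h1 (by positivity : (0:ℝ) ≤ 2 * t)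
      linarith
    have hid : (∑ i, x i ^ 2) - 2 * t * (c * ∑ i, x i ^ 2) + t ^ 2 * (K ^ 2 * ∑ i, x i ^ 2)
        = (1 - c ^ 2 / K ^ 2) * ∑ i, x i ^ 2 := by
      rw [htval]; field_simp; ring
    linarith
  -- iterate
  have hq2nn : (0:ℝ) ≤ q ^ 2 := sq_nonneg q
  have hBpow_norm : ∀ (n : ℕ) (x : Fin N → ℝ),
      ∑ i, ((B ^ n).mulVec x) i ^ 2 ≤ (q ^ 2) ^ n * ∑ i, x i ^ 2 := by
    intro n
    induction n with
    | zero => intro x; simp [Matrix.one_mulVec]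
    | succ n ih =>
      intro x
      have : (B ^ (n + 1)).mulVec x = B.mulVec ((B ^ n).mulVec x) := by
        rw [Matrix.mulVec_mulVec, ← pow_succ']
      rw [this]
      calc ∑ i, (B.mulVec ((B ^ n).mulVec x)) i ^ 2
          ≤ q ^ 2 * ∑ i, ((B ^ n).mulVec x) i ^ 2 := hBnorm _
        _ ≤ q ^ 2 * ((q ^ 2) ^ n * ∑ i, x i ^ 2) := mul_le_mul_of_nonneg_left (ih x) hq2nn
        _ = (q ^ 2) ^ (n + 1) * ∑ i, x i ^ 2 := by ring
  -- single-entry extraction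
  have hsingle : ∀ (j : Fin N), ∑ i, (Pi.single j 1 : Fin N → ℝ) i ^ 2 = 1 := by
    intro j
    rw [Finset.sum_eq_single j]
    · simp
    · intro b _ hb; simp [Pi.single_apply, hb]
    · intro h; exact absurd (Finset.mem_univ j) h
  have hentry_le : ∀ (Cm : Matrix (Fin N) (Fin N) ℝ) (x : Fin N → ℝ) (i : Fin N),
      (Cm.mulVec x) i ^ 2 ≤ ∑ k, (Cm.mulVec x) k ^ 2 :=
    fun Cm x i => Finset.single_le_sum (f := fun k => (Cm.mulVec x) k ^ 2)
      (fun k _ => sq_nonneg _) (Finset.mem_univ i)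
  -- |(B^n)_{ij}| ≤ q^n
  have hBpow_q : ∀ (n : ℕ) (i j : Fin N), |(B ^ n) i j| ≤ q ^ n := by
    intro n i j
    have h1 : (B ^ n).mulVec (Pi.single j 1 : Fin N → ℝ) = fun i => (B ^ n) i j * 1 :=
      Matrix.mulVec_single _ _ _
    have h2 : ((B ^ n) i j) ^ 2 ≤ (q ^ 2) ^ n := by
      have := hentry_le (B ^ n) (Pi.single j 1 : Fin N → ℝ) i
      rw [h1] at this
      simp only [mul_one] at this
      have h3 := hBpow_norm n (Pi.single j 1 : Fin N → ℝ)
      rw [hsingle j, mul_one, h1] at h3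
      simp only [mul_one] at h3
      exact le_trans this h3
    have : |(B ^ n) i j| = Real.sqrt (((B ^ n) i j) ^ 2) := (Real.sqrt_sq_eq_abs _).symm
    rw [this]
    calc Real.sqrt (((B ^ n) i j) ^ 2) ≤ Real.sqrt ((q ^ 2) ^ n) := Real.sqrt_le_sqrt h2
      _ = q ^ n := by
        rw [show (q ^ 2) ^ n = (q ^ n) ^ 2 by ring, Real.sqrt_sq (pow_nonneg hq0.le n)]
  -- entrywise bound for B
  set D : ℝ := 1 + t * C with hDdef
  have hD0 : 0 < D := by positivity
  have hB_decay : ∀ i j, |B i j| ≤ D * Real.exp (-α * dd i j) := by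
    intro i j
    have hBij : B i j = (if i = j then (1:ℝ) else 0) - t * A i j := by
      simp [hBdef, Matrix.sub_apply, Matrix.one_apply, Matrix.smul_apply, smul_eq_mul]
    rw [hBij]
    rcases eq_or_ne i j with h | h
    · subst h
      simp only [if_pos rfl]
      rw [hdddiag i, mul_zero, Real.exp_zero, mul_one]
      have h1 : |A i i| ≤ C := by
        have := hA i i; rwa [hdddiag i, mul_zero, Real.exp_zero, mul_one] at this
      calc |1 - t * A i i| ≤ |(1:ℝ)| + |t * A i i| := abs_sub _ _
        _ = 1 + t * |A i i| := by rw [abs_one, abs_mul, abs_of_pos ht]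
        _ ≤ 1 + t * C := by nlinarith [abs_nonneg (A i i)]
    · simp only [if_neg h, zero_sub, abs_neg, abs_mul, abs_of_pos ht]
      calc t * |A i j| ≤ t * (C * Real.exp (-α * dd i j)) :=
            mul_le_mul_of_nonneg_left (hA i j) ht.le
        _ = (t * C) * Real.exp (-α * dd i j) := by ring
        _ ≤ D * Real.exp (-α * dd i j) := by
          have hD : t * C ≤ D := by rw [hDdef]; linarith
          exact mul_le_mul_of_nonneg_right hD (Real.exp_pos _).le
  -- entrywise bound for powers of B with halved exponent
  set β : ℝ := α / 2 with hβdef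
  have hβ0 : 0 < β := by positivity
  have hS0 : 0 < S := lt_of_lt_of_le one_pos hS
  have hE_ge_DS : D * S ≤ E := le_max_left _ _
  have hBpow_E : ∀ (n : ℕ) (i j : Fin N), |(B ^ n) i j| ≤ E ^ n * Real.exp (-β * dd i j) := by
    intro n
    induction n with
    | zero =>
      intro i j
      rcases eq_or_ne i j with h | h
      · subst h
        simp only [pow_zero, Matrix.one_apply_eq, abs_one, one_mul]
        rw [hdddiag i, mul_zero, Real.exp_zero]
      · simp only [pow_zero, Matrix.one_apply_ne h, abs_zero, one_mul]
        positivity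
    | succ n ih =>
      intro i j
      have hmul : (B ^ (n + 1)) i j = ∑ k, B i k * (B ^ n) k j := by
        rw [pow_succ', Matrix.mul_apply]
      rw [hmul]
      calc |∑ k, B i k * (B ^ n) k j| ≤ ∑ k, |B i k * (B ^ n) k j| :=
            Finset.abs_sum_le_sum_abs _ _
        _ = ∑ k, |B i k| * |(B ^ n) k j| := by
            exact Finset.sum_congr rfl fun k _ => abs_mul _ _
        _ ≤ ∑ k, (D * Real.exp (-α * dd i k)) * (E ^ n * Real.exp (-β * dd k j)) := by
            apply Finset.sum_le_sum
            intro k _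
            exact mul_le_mul (hB_decay i k) (ih k j) (abs_nonneg _)
              (mul_nonneg hD0.le (Real.exp_pos _).le)
        _ ≤ ∑ k, (D * E ^ n * Real.exp (-β * dd i j)) * Real.exp (-β * dd i k) := by
            apply Finset.sum_le_sum
            intro k _
            have hexp : Real.exp (-α * dd i k) * Real.exp (-β * dd k j) ≤
                Real.exp (-β * dd i j) * Real.exp (-β * dd i k) := by
              rw [← Real.exp_add, ← Real.exp_add]
              apply Real.exp_le_exp.mpr
              have h1 := htri i j k
              have h2 := hdd0 i k
              have h3 := hdd0 k j
              rw [hβdef]; nlinarith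
            calc D * Real.exp (-α * dd i k) * (E ^ n * Real.exp (-β * dd k j))
                = (D * E ^ n) * (Real.exp (-α * dd i k) * Real.exp (-β * dd k j)) := by ring
              _ ≤ (D * E ^ n) * (Real.exp (-β * dd i j) * Real.exp (-β * dd i k)) := by
                  have hE0' : (0:ℝ) ≤ E := le_trans zero_le_one hE1
                  exact mul_le_mul_of_nonneg_left hexp
                    (mul_nonneg hD0.le (pow_nonneg hE0' n))
              _ = (D * E ^ n * Real.exp (-β * dd i j)) * Real.exp (-β * dd i k) := by ring
        _ = (D * E ^ n * Real.exp (-β * dd i j)) * ∑ k, Real.exp (-β * dd i k) := by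
            rw [← Finset.mul_sum]
        _ ≤ (D * E ^ n * Real.exp (-β * dd i j)) * S := by
            have hE0' : (0:ℝ) ≤ E := le_trans zero_le_one hE1
            apply mul_le_mul_of_nonneg_left _
              (mul_nonneg (mul_nonneg hD0.le (pow_nonneg hE0' n)) (Real.exp_pos _).le)
            have := hrow i
            rw [hβdef]; exact this
        _ ≤ E ^ (n + 1) * Real.exp (-β * dd i j) := by
            have hE0 : (0:ℝ) < E := lt_of_lt_of_le one_pos hE1
            have : D * S * E ^ n ≤ E * E ^ n :=
              mul_le_mul_of_nonneg_right hE_ge_DS (pow_nonneg hE0.le n)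
            have hexp0 : (0:ℝ) < Real.exp (-β * dd i j) := Real.exp_pos _
            calc D * E ^ n * Real.exp (-β * dd i j) * S
                = (D * S * E ^ n) * Real.exp (-β * dd i j) := by ring
              _ ≤ (E * E ^ n) * Real.exp (-β * dd i j) :=
                  mul_le_mul_of_nonneg_right this hexp0.le
              _ = E ^ (n + 1) * Real.exp (-β * dd i j) := by ring
  -- interpolated entry bound
  have hE0 : (0:ℝ) < E := lt_of_lt_of_le one_pos hE1
  set γt : ℝ := JLγ c K C S α with hγtdef
  have hγteq : γt = θ * β := rfl
  have hρeq : ρ = q ^ (1 - θ) * E ^ θ := rfl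
  have hBpow_interp : ∀ (n : ℕ) (i j : Fin N),
      |(B ^ n) i j| ≤ ρ ^ n * Real.exp (-γt * dd i j) := by
    intro n i j
    have h1 := hBpow_q n i j
    have h2 := hBpow_E n i j
    have hbnn : (0:ℝ) ≤ E ^ n * Real.exp (-β * dd i j) :=
      mul_nonneg (pow_nonneg hE0.le n) (Real.exp_pos _).le
    have h := interp_bound (pow_nonneg hq0.le n) hbnn hθpos.le hθle h1 h2
    have hqpart : (q ^ n) ^ (1 - θ) = (q ^ (1 - θ)) ^ n := pow_rpow_comm hq0.le n _
    have hsplit : (E ^ n * Real.exp (-β * dd i j)) ^ θ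
        = (E ^ θ) ^ n * Real.exp (-(θ * β) * dd i j) := by
      rw [Real.mul_rpow (pow_nonneg hE0.le n) (Real.exp_pos _).le,
        pow_rpow_comm hE0.le n θ, ← Real.exp_mul]
      ring_nf
    calc |(B ^ n) i j| ≤ (q ^ n) ^ (1 - θ) * (E ^ n * Real.exp (-β * dd i j)) ^ θ := h
      _ = (q ^ (1 - θ)) ^ n * ((E ^ θ) ^ n * Real.exp (-(θ * β) * dd i j)) := by
          rw [hqpart, hsplit]
      _ = ρ ^ n * Real.exp (-γt * dd i j) := by
          rw [hρeq, hγteq, mul_pow]; ring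
  -- geometric series identity
  have hAAinv : A * A⁻¹ = 1 := Matrix.mul_nonsing_inv A hdet
  have hgeom : ∀ m : ℕ, A⁻¹ = B ^ m * A⁻¹ + t • ∑ n ∈ Finset.range m, B ^ n := by
    intro m
    have h1 : (∑ n ∈ Finset.range m, B ^ n) * (1 - B) = 1 - B ^ m := by
      have := geom_sum_mul B m
      calc (∑ n ∈ Finset.range m, B ^ n) * (1 - B)
          = -((∑ n ∈ Finset.range m, B ^ n) * (B - 1)) := by
            rw [show (1 : Matrix (Fin N) (Fin N) ℝ) - B = -(B - 1) from (neg_sub B 1).symm,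
              mul_neg]
        _ = -(B ^ m - 1) := by rw [this]
        _ = 1 - B ^ m := neg_sub _ _
    have h2 : (1 : Matrix (Fin N) (Fin N) ℝ) - B = t • A := by
      rw [hBdef]; exact sub_sub_cancel 1 (t • A)
    have h3 : (∑ n ∈ Finset.range m, B ^ n) * (t • A) = 1 - B ^ m := by rw [← h2]; exact h1
    have h4 : ((∑ n ∈ Finset.range m, B ^ n) * (t • A)) * A⁻¹ = (1 - B ^ m) * A⁻¹ := by
      rw [h3]
    have h5 : t • ∑ n ∈ Finset.range m, B ^ n = A⁻¹ - B ^ m * A⁻¹ := by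
      calc t • ∑ n ∈ Finset.range m, B ^ n
          = t • ((∑ n ∈ Finset.range m, B ^ n) * (A * A⁻¹)) := by rw [hAAinv, mul_one]
        _ = ((∑ n ∈ Finset.range m, B ^ n) * (t • A)) * A⁻¹ := by
            rw [Matrix.mul_smul, Matrix.smul_mul, mul_assoc]
        _ = (1 - B ^ m) * A⁻¹ := h4
        _ = A⁻¹ - B ^ m * A⁻¹ := by rw [sub_mul, one_mul]
    rw [h5]; abel
  -- bound on the tail (B^m * A⁻¹) entries
  have hcol : ∀ j : Fin N, ∑ k, (fun k => A⁻¹ k j) k ^ 2 ≤ 1 / c ^ 2 := by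
    intro j
    set y : Fin N → ℝ := fun k => A⁻¹ k j with hydef
    have hAy : A.mulVec y = (Pi.single j 1 : Fin N → ℝ) := by
      funext i
      have : A.mulVec y i = (A * A⁻¹) i j := by
        rw [Matrix.mul_apply, Matrix.mulVec]
        simp [dotProduct, hydef]
      rw [this, hAAinv, Matrix.one_apply, Pi.single_apply]
    have h1 := hlow y
    rw [hAy, hsingle j] at h1
    have hc2 : (0:ℝ) < c ^ 2 := by positivity
    rw [le_div_iff₀ hc2]
    linarith [h1]
  have htail : ∀ (m : ℕ) (i j : Fin N), |(B ^ m * A⁻¹) i j| ≤ q ^ m / c := by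
    intro m i j
    set y : Fin N → ℝ := fun k => A⁻¹ k j with hydef
    have h1 : (B ^ m * A⁻¹) i j = (B ^ m).mulVec y i := by
      rw [Matrix.mul_apply, Matrix.mulVec]
      simp [dotProduct, hydef]
    have h2 : ((B ^ m).mulVec y i) ^ 2 ≤ (q ^ 2) ^ m * (1 / c ^ 2) := by
      calc ((B ^ m).mulVec y i) ^ 2 ≤ ∑ k, ((B ^ m).mulVec y) k ^ 2 := hentry_le _ _ _
        _ ≤ (q ^ 2) ^ m * ∑ k, y k ^ 2 := hBpow_norm m y
        _ ≤ (q ^ 2) ^ m * (1 / c ^ 2) := by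
            exact mul_le_mul_of_nonneg_left (hcol j) (pow_nonneg hq2nn m)
    rw [h1, ← Real.sqrt_sq_eq_abs]
    calc Real.sqrt (((B ^ m).mulVec y i) ^ 2) ≤ Real.sqrt ((q ^ 2) ^ m * (1 / c ^ 2)) :=
          Real.sqrt_le_sqrt h2
      _ = q ^ m / c := by
          rw [show (q ^ 2) ^ m * (1 / c ^ 2) = (q ^ m / c) ^ 2 by ring]
          exact Real.sqrt_sq (by positivity)
  -- conclude
  intro i j
  have hgeom_sum_le : ∀ m : ℕ, (∑ n ∈ Finset.range m, ρ ^ n) ≤ (1 - ρ)⁻¹ := by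
    intro m
    have hsummable : Summable (fun n : ℕ => ρ ^ n) := summable_geometric_of_lt_one hρpos.le hρlt
    have := Summable.sum_le_tsum (Finset.range m) (fun n _ => pow_nonneg hρpos.le n) hsummable
    rwa [tsum_geometric_of_lt_one hρpos.le hρlt] at this
  have hbound : ∀ m : ℕ, |A⁻¹ i j| ≤ q ^ m / c + t * (1 - ρ)⁻¹ * Real.exp (-γt * dd i j) := by
    intro m
    have hid := hgeom m
    have h1 : A⁻¹ i j = (B ^ m * A⁻¹) i j + t * (∑ n ∈ Finset.range m, B ^ n) i j := by
      conv_lhs => rw [hid]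
      simp [Matrix.add_apply, Matrix.smul_apply, smul_eq_mul]
    have h2 : |(∑ n ∈ Finset.range m, B ^ n) i j| ≤ (1 - ρ)⁻¹ * Real.exp (-γt * dd i j) := by
      have hsumapp : (∑ n ∈ Finset.range m, B ^ n) i j = ∑ n ∈ Finset.range m, (B ^ n) i j := by
        simp [Matrix.sum_apply]
      rw [hsumapp]
      calc |∑ n ∈ Finset.range m, (B ^ n) i j| ≤ ∑ n ∈ Finset.range m, |(B ^ n) i j| :=
            Finset.abs_sum_le_sum_abs _ _
        _ ≤ ∑ n ∈ Finset.range m, ρ ^ n * Real.exp (-γt * dd i j) :=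
            Finset.sum_le_sum fun n _ => hBpow_interp n i j
        _ = (∑ n ∈ Finset.range m, ρ ^ n) * Real.exp (-γt * dd i j) := by
            rw [← Finset.sum_mul]
        _ ≤ (1 - ρ)⁻¹ * Real.exp (-γt * dd i j) :=
            mul_le_mul_of_nonneg_right (hgeom_sum_le m) (Real.exp_pos _).le
    calc |A⁻¹ i j| = |(B ^ m * A⁻¹) i j + t * (∑ n ∈ Finset.range m, B ^ n) i j| := by rw [← h1]
      _ ≤ |(B ^ m * A⁻¹) i j| + |t * (∑ n ∈ Finset.range m, B ^ n) i j| := abs_add_le _ _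
      _ ≤ q ^ m / c + t * ((1 - ρ)⁻¹ * Real.exp (-γt * dd i j)) := by
          have := htail m i j
          have h3 : |t * (∑ n ∈ Finset.range m, B ^ n) i j|
              = t * |(∑ n ∈ Finset.range m, B ^ n) i j| := by
            rw [abs_mul, abs_of_pos ht]
          rw [h3]
          exact add_le_add this (mul_le_mul_of_nonneg_left h2 ht.le)
      _ = q ^ m / c + t * (1 - ρ)⁻¹ * Real.exp (-γt * dd i j) := by ring
  have hlim : Filter.Tendsto (fun m : ℕ => q ^ m / c + t * (1 - ρ)⁻¹ * Real.exp (-γt * dd i j))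
      Filter.atTop (nhds (t * (1 - ρ)⁻¹ * Real.exp (-γt * dd i j))) := by
    have h1 : Filter.Tendsto (fun m : ℕ => q ^ m / c) Filter.atTop (nhds 0) := by
      have := tendsto_pow_atTop_nhds_zero_of_lt_one hq0.le hq1
      simpa using this.div_const c
    have := h1.add (tendsto_const_nhds
      (x := t * (1 - ρ)⁻¹ * Real.exp (-γt * dd i j)) (f := Filter.atTop))
    simpa using this
  have hfinal : |A⁻¹ i j| ≤ t * (1 - ρ)⁻¹ * Real.exp (-γt * dd i j) :=
    ge_of_tendsto' hlim hbound
  have hCs : JLCs c K C S = t * (1 - ρ)⁻¹ := by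
    rw [JLCs, div_eq_mul_inv]
  rw [hCs]
  exact hfinal

noncomputable def extZ (N : ℕ) (x : Fin N → ℝ) : ℕ → ℝ :=
  fun j => if h : j < N then x ⟨j, h⟩ else 0

lemma extZ_eq_zero {N : ℕ} (x : Fin N → ℝ) {j : ℕ} (hj : j ∉ Finset.range N) :
    extZ N x j = 0 := by
  rw [extZ, dif_neg (by simpa using hj)]

lemma extZ_coe {N : ℕ} (x : Fin N → ℝ) (i : Fin N) : extZ N x i = x i := by
  rw [extZ, dif_pos i.isLt]

lemma extZ_memℓ2 {N : ℕ} (x : Fin N → ℝ) : Memℓ2 (extZ N x) := by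
  apply summable_of_ne_finset_zero (s := Finset.range N)
  intro j hj
  rw [extZ_eq_zero x hj]
  norm_num

lemma extZ_tsum_sq {N : ℕ} (x : Fin N → ℝ) :
    ∑' i, extZ N x i ^ 2 = ∑ i : Fin N, x i ^ 2 := by
  rw [tsum_eq_sum (s := Finset.range N) (fun j hj => by rw [extZ_eq_zero x hj]; norm_num),
    ← Fin.sum_univ_eq_sum_range (fun j => extZ N x j ^ 2) N]
  exact Finset.sum_congr rfl fun i _ => by rw [extZ_coe]

lemma mulVec_extZ {N : ℕ} (M : Mat) (x : Fin N → ℝ) (i : ℕ) :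
    mulVec M (extZ N x) i = ∑ k : Fin N, M i k * x k := by
  rw [mulVec, tsum_eq_sum (s := Finset.range N)
    (fun j hj => by rw [extZ_eq_zero x hj, mul_zero]),
    ← Fin.sum_univ_eq_sum_range (fun j => M i j * extZ N x j) N]
  exact Finset.sum_congr rfl fun k _ => by rw [extZ_coe]

lemma sect_mulVec {N : ℕ} (M : Mat) (x : Fin N → ℝ) (i : Fin N) :
    (sect M N).mulVec x i = ∑ k : Fin N, M i k * x k := by
  simp [Matrix.mulVec, dotProduct, sect]

lemma sect_elliptic {N : ℕ} (M : Mat) (c : ℝ) (hell : Elliptic M c) (x : Fin N → ℝ) :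
    c * ∑ i, x i ^ 2 ≤ ∑ i, ((sect M N).mulVec x) i * x i := by
  have h := hell (extZ N x) (extZ_memℓ2 x)
  rw [extZ_tsum_sq] at h
  have hR : ∑' i, mulVec M (extZ N x) i * extZ N x i
      = ∑ i : Fin N, ((sect M N).mulVec x) i * x i := by
    rw [tsum_eq_sum (s := Finset.range N)
      (fun j hj => by rw [extZ_eq_zero x hj, mul_zero]),
      ← Fin.sum_univ_eq_sum_range (fun j => mulVec M (extZ N x) j * extZ N x j) N]
    refine Finset.sum_congr rfl fun i _ => ?_
    rw [extZ_coe, mulVec_extZ, sect_mulVec]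
  rwa [hR] at h

lemma sect_bounded {N : ℕ} (M : Mat) (K : ℝ) (hK0 : 0 ≤ K) (hb : BoundedWith M K)
    (x : Fin N → ℝ) :
    ∑ i, ((sect M N).mulVec x) i ^ 2 ≤ K ^ 2 * ∑ i, x i ^ 2 := by
  obtain ⟨-, hmem, hnorm⟩ := hb (extZ N x) (extZ_memℓ2 x)
  have h1 : ∑ i : Fin N, ((sect M N).mulVec x) i ^ 2
      ≤ ∑' i, mulVec M (extZ N x) i ^ 2 := by
    have h2 : ∑ i : Fin N, ((sect M N).mulVec x) i ^ 2
        = ∑ i ∈ Finset.range N, mulVec M (extZ N x) i ^ 2 := by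
      rw [← Fin.sum_univ_eq_sum_range (fun j => mulVec M (extZ N x) j ^ 2) N]
      exact Finset.sum_congr rfl fun i _ => by rw [mulVec_extZ, sect_mulVec]
    rw [h2]
    exact Summable.sum_le_tsum _ (fun j _ => sq_nonneg _) hmem
  have h3 : ∑' i, mulVec M (extZ N x) i ^ 2 ≤ K ^ 2 * ∑' i, extZ N x i ^ 2 := by
    have hl := hnorm
    rw [l2norm, l2norm] at hl
    have h4 : (0:ℝ) ≤ ∑' i, mulVec M (extZ N x) i ^ 2 := tsum_nonneg fun i => sq_nonneg _
    have h5 : (0:ℝ) ≤ ∑' i, extZ N x i ^ 2 := tsum_nonneg fun i => sq_nonneg _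
    have h6 := mul_self_le_mul_self (Real.sqrt_nonneg _) hl
    rw [Real.mul_self_sqrt h4] at h6
    calc ∑' i, mulVec M (extZ N x) i ^ 2
        ≤ (K * Real.sqrt (∑' i, extZ N x i ^ 2)) * (K * Real.sqrt (∑' i, extZ N x i ^ 2)) := h6
      _ = K ^ 2 * ∑' i, extZ N x i ^ 2 := by
          rw [show (K * Real.sqrt (∑' i, extZ N x i ^ 2)) * (K * Real.sqrt (∑' i, extZ N x i ^ 2))
            = K ^ 2 * (Real.sqrt (∑' i, extZ N x i ^ 2) * Real.sqrt (∑' i, extZ N x i ^ 2)) by ring,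
            Real.mul_self_sqrt h5]
  rw [extZ_tsum_sq] at h3
  exact le_trans h1 h3

lemma tsum_cauchy_schwarz {a b : ℕ → ℝ} (ha : ∀ i, 0 ≤ a i) (hb : ∀ i, 0 ≤ b i)
    (ha2 : Summable fun i => a i ^ 2) (hb2 : Summable fun i => b i ^ 2) :
    (∑' i, a i * b i) ≤ Real.sqrt (∑' i, a i ^ 2) * Real.sqrt (∑' i, b i ^ 2) := by
  have hsum : Summable fun i => a i * b i := by
    apply Summable.of_nonneg_of_le (fun i => mul_nonneg (ha i) (hb i))
      (fun i => ?_) ((ha2.add hb2).div_const 2)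
    nlinarith [sq_nonneg (a i - b i)]
  apply Summable.tsum_le_of_sum_le hsum
  intro s
  have h1 : (∑ i ∈ s, a i * b i) ^ 2 ≤ (∑ i ∈ s, a i ^ 2) * ∑ i ∈ s, b i ^ 2 :=
    Finset.sum_mul_sq_le_sq_mul_sq s a b
  have h2 : ∑ i ∈ s, a i * b i ≤ Real.sqrt ((∑ i ∈ s, a i ^ 2) * ∑ i ∈ s, b i ^ 2) := by
    have h3 : ∑ i ∈ s, a i * b i = Real.sqrt ((∑ i ∈ s, a i * b i) ^ 2) :=
      (Real.sqrt_sq (Finset.sum_nonneg fun i _ => mul_nonneg (ha i) (hb i))).symm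
    rw [h3]
    exact Real.sqrt_le_sqrt h1
  calc ∑ i ∈ s, a i * b i
      ≤ Real.sqrt ((∑ i ∈ s, a i ^ 2) * ∑ i ∈ s, b i ^ 2) := h2
    _ = Real.sqrt (∑ i ∈ s, a i ^ 2) * Real.sqrt (∑ i ∈ s, b i ^ 2) :=
        Real.sqrt_mul (Finset.sum_nonneg fun i _ => sq_nonneg _) _
    _ ≤ Real.sqrt (∑' i, a i ^ 2) * Real.sqrt (∑' i, b i ^ 2) := by
        apply mul_le_mul
        · exact Real.sqrt_le_sqrt (Summable.sum_le_tsum s (fun i _ => sq_nonneg _) ha2)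
        · exact Real.sqrt_le_sqrt (Summable.sum_le_tsum s (fun i _ => sq_nonneg _) hb2)
        · exact Real.sqrt_nonneg _
        · exact Real.sqrt_nonneg _

set_option maxHeartbeats 1000000 in
lemma schur_bounded (d : ℕ → ℕ → ℝ) (hd : IsMetric d) (γt S : ℝ) (hγt : 0 < γt)
    (hSrow : ∀ i, (Summable fun j => Real.exp (-γt * d i j)) ∧
      (∑' j, Real.exp (-γt * d i j)) ≤ S)
    (Cs : ℝ) (hCs : 0 < Cs) (G : Mat)
    (hG : ∀ i j, |G i j| ≤ Cs * Real.exp (-γt * d i j)) : IsBoundedOp G := by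
  obtain ⟨hd0, hdeq, hdsym, hdtri⟩ := hd
  set e : ℕ → ℕ → ℝ := fun i j => Real.exp (-γt * d i j) with hedef
  have he0 : ∀ i j, 0 < e i j := fun i j => Real.exp_pos _
  have he1 : ∀ i j, e i j ≤ 1 := fun i j =>
    Real.exp_le_one_iff.mpr (mul_nonpos_of_nonpos_of_nonneg (by linarith) (hd0 i j))
  have hesym : ∀ i j, e i j = e j i := fun i j => by rw [hedef]; simp [hdsym i j]
  have hS1 : 1 ≤ S := by
    have h1 : e 0 0 ≤ ∑' j, e 0 j :=
      Summable.le_tsum (hSrow 0).1 0 (fun j _ => (he0 0 j).le)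
    have h2 : e 0 0 = 1 := by
      rw [hedef]; simp [(hdeq 0 0).mpr rfl]
    linarith [(hSrow 0).2, h1, h2.symm.le]
  have hS0 : 0 < S := lt_of_lt_of_le one_pos hS1
  refine ⟨Cs * S, by positivity, ?_⟩
  intro x hx
  set u : ℕ → ℝ := fun j => x j ^ 2 with hudef
  have hu0 : ∀ j, 0 ≤ u j := fun j => sq_nonneg _
  have he_summ : ∀ i, Summable fun j => e i j := fun i => (hSrow i).1
  have hecol_summ : ∀ j, Summable fun i => e i j := by
    intro j
    have := (hSrow j).1
    apply this.congr
    intro i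
    exact (hesym i j).symm
  have heu_summ : ∀ i, Summable fun j => e i j * u j := by
    intro i
    apply Summable.of_nonneg_of_le (fun j => mul_nonneg (he0 i j).le (hu0 j))
      (fun j => ?_) hx
    calc e i j * u j ≤ 1 * u j := mul_le_mul_of_nonneg_right (he1 i j) (hu0 j)
      _ = u j := one_mul _
  have hex_summ : ∀ i, Summable fun j => e i j * |x j| := by
    intro i
    apply Summable.of_nonneg_of_le (fun j => mul_nonneg (he0 i j).le (abs_nonneg _))
      (fun j => ?_) (((he_summ i).add (heu_summ i)).div_const 2)
    have hxj : |x j| ≤ (1 + u j) / 2 := by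
      rw [hudef]; nlinarith [sq_nonneg (|x j| - 1), sq_abs (x j)]
    calc e i j * |x j| ≤ e i j * ((1 + u j) / 2) :=
          mul_le_mul_of_nonneg_left hxj (he0 i j).le
      _ = (e i j + e i j * u j) / 2 := by ring
  -- row summability of |G i j * x j|
  have hrow_summ : ∀ i, Summable fun j => |G i j * x j| := by
    intro i
    apply Summable.of_nonneg_of_le (fun j => abs_nonneg _) (fun j => ?_)
      ((hex_summ i).mul_left Cs)
    rw [abs_mul, ← mul_assoc]
    exact mul_le_mul_of_nonneg_right (hG i j) (abs_nonneg _)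
  set w : ℕ → ℝ := fun i => ∑' j, e i j * u j with hwdef
  have hw0 : ∀ i, 0 ≤ w i := fun i =>
    tsum_nonneg fun j => mul_nonneg (he0 i j).le (hu0 j)
  -- pointwise bound
  have hpt : ∀ i, (mulVec G x i) ^ 2 ≤ Cs ^ 2 * S * w i := by
    intro i
    have h1 : |mulVec G x i| ≤ Cs * ∑' j, e i j * |x j| := by
      rw [mulVec]
      calc |∑' j, G i j * x j| ≤ ∑' j, |G i j * x j| := by
            have := norm_tsum_le_tsum_norm (f := fun j => G i j * x j) ?_
            · simpa [Real.norm_eq_abs, abs_mul] using this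
            · simpa [Real.norm_eq_abs, abs_mul] using hrow_summ i
        _ ≤ ∑' j, Cs * (e i j * |x j|) := by
            apply Summable.tsum_le_tsum _ (hrow_summ i) ((hex_summ i).mul_left Cs)
            intro j
            rw [abs_mul, ← mul_assoc]
            exact mul_le_mul_of_nonneg_right (hG i j) (abs_nonneg _)
        _ = Cs * ∑' j, e i j * |x j| := by rw [tsum_mul_left]
    have h2 : ∑' j, e i j * |x j| ≤ Real.sqrt S * Real.sqrt (w i) := by
      have hcs := tsum_cauchy_schwarz (a := fun j => Real.sqrt (e i j))
        (b := fun j => Real.sqrt (e i j) * |x j|)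
        (fun j => Real.sqrt_nonneg _)
        (fun j => mul_nonneg (Real.sqrt_nonneg _) (abs_nonneg _)) ?_ ?_
      · have ha2 : ∑' j, Real.sqrt (e i j) ^ 2 = ∑' j, e i j :=
          tsum_congr fun j => Real.sq_sqrt (he0 i j).le
        have hb2 : ∑' j, (Real.sqrt (e i j) * |x j|) ^ 2 = w i := by
          rw [hwdef]
          exact tsum_congr fun j => by
            rw [mul_pow, Real.sq_sqrt (he0 i j).le, sq_abs]
        have hab : ∑' j, Real.sqrt (e i j) * (Real.sqrt (e i j) * |x j|)
            = ∑' j, e i j * |x j| :=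
          tsum_congr fun j => by
            rw [← mul_assoc, Real.mul_self_sqrt (he0 i j).le]
        rw [hab, ha2, hb2] at hcs
        calc ∑' j, e i j * |x j| ≤ Real.sqrt (∑' j, e i j) * Real.sqrt (w i) := hcs
          _ ≤ Real.sqrt S * Real.sqrt (w i) :=
              mul_le_mul_of_nonneg_right (Real.sqrt_le_sqrt (hSrow i).2) (Real.sqrt_nonneg _)
      · exact (he_summ i).congr fun j => (Real.sq_sqrt (he0 i j).le).symm
      · exact (heu_summ i).congr fun j => by
          rw [mul_pow, Real.sq_sqrt (he0 i j).le, sq_abs]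
    have h3 : |mulVec G x i| ≤ Cs * (Real.sqrt S * Real.sqrt (w i)) :=
      le_trans h1 (mul_le_mul_of_nonneg_left h2 hCs.le)
    calc (mulVec G x i) ^ 2 = |mulVec G x i| ^ 2 := (sq_abs _).symm
      _ ≤ (Cs * (Real.sqrt S * Real.sqrt (w i))) ^ 2 := by
          apply pow_le_pow_left₀ (abs_nonneg _) h3
      _ = Cs ^ 2 * (Real.sqrt S ^ 2 * Real.sqrt (w i) ^ 2) := by ring
      _ = Cs ^ 2 * S * w i := by
          rw [Real.sq_sqrt hS0.le, Real.sq_sqrt (hw0 i)]; ring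
  -- Fubini: summability of w and bound on its sum
  have hf : Summable (fun p : ℕ × ℕ => e p.2 p.1 * u p.1) := by
    rw [summable_prod_of_nonneg (fun p => mul_nonneg (he0 p.2 p.1).le (hu0 p.1))]
    constructor
    · intro j
      have : Summable fun i => u j * e j i := (he_summ j).mul_left (u j)
      apply this.congr
      intro i
      rw [hesym i j]; ring
    · apply Summable.of_nonneg_of_le
        (fun j => tsum_nonneg fun i => mul_nonneg (he0 i j).le (hu0 j))
        (fun j => ?_) (hx.mul_left S)
      have h1 : ∑' i, e i j * u j = u j * ∑' i, e j i := by
        rw [← tsum_mul_left]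
        exact tsum_congr fun i => by rw [hesym i j]; ring
      rw [h1]
      calc u j * ∑' i, e j i ≤ u j * S :=
            mul_le_mul_of_nonneg_left (hSrow j).2 (hu0 j)
        _ = S * u j := by ring
  have hfswap : Summable (fun p : ℕ × ℕ => e p.1 p.2 * u p.2) := by
    have := hf.prod_symm
    apply this.congr
    intro p
    rfl
  have hw_summ : Summable w ∧ (∑' i, w i) ≤ S * ∑' j, u j := by
    have hiff := (summable_prod_of_nonneg
      (f := fun p : ℕ × ℕ => e p.1 p.2 * u p.2)
      (fun p => mul_nonneg (he0 p.1 p.2).le (hu0 p.2))).mp hfswap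
    have hw_s : Summable w := by
      apply hiff.2.congr
      intro i
      rfl
    refine ⟨hw_s, ?_⟩
    have h1 : ∑' i, w i = ∑' (p : ℕ × ℕ), e p.1 p.2 * u p.2 :=
      (Summable.tsum_prod' hfswap hiff.1).symm
    have h2 : ∑' (p : ℕ × ℕ), e p.1 p.2 * u p.2 = ∑' j, ∑' i, e i j * u j := by
      rw [← (Equiv.prodComm ℕ ℕ).tsum_eq (fun p : ℕ × ℕ => e p.1 p.2 * u p.2)]
      have hiff2 := (summable_prod_of_nonneg
        (f := fun p : ℕ × ℕ => e p.2 p.1 * u p.1)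
        (fun p => mul_nonneg (he0 p.2 p.1).le (hu0 p.1))).mp hf
      exact Summable.tsum_prod' hf hiff2.1
    rw [h1, h2]
    have h3 : ∀ j, ∑' i, e i j * u j ≤ S * u j := by
      intro j
      have h4 : ∑' i, e i j * u j = u j * ∑' i, e j i := by
        rw [← tsum_mul_left]
        exact tsum_congr fun i => by rw [hesym i j]; ring
      rw [h4]
      calc u j * ∑' i, e j i ≤ u j * S := mul_le_mul_of_nonneg_left (hSrow j).2 (hu0 j)
        _ = S * u j := by ring
    have hsum1 : Summable fun j => ∑' i, e i j * u j :=
      ((summable_prod_of_nonneg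
        (f := fun p : ℕ × ℕ => e p.2 p.1 * u p.1)
        (fun p => mul_nonneg (he0 p.2 p.1).le (hu0 p.1))).mp hf).2
    have h7 := Summable.tsum_le_tsum h3 hsum1 (hx.mul_left S)
    rwa [tsum_mul_left] at h7
  have hmem : Memℓ2 (mulVec G x) := by
    apply Summable.of_nonneg_of_le (fun i => sq_nonneg _) (fun i => hpt i)
      (hw_summ.1.mul_left (Cs ^ 2 * S))
  refine ⟨hrow_summ, hmem, ?_⟩
  rw [l2norm, l2norm]
  have h5 : ∑' i, mulVec G x i ^ 2 ≤ Cs ^ 2 * S * ∑' i, w i := by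
    have := Summable.tsum_le_tsum hpt hmem (hw_summ.1.mul_left (Cs ^ 2 * S))
    rwa [tsum_mul_left] at this
  have h6 : ∑' i, mulVec G x i ^ 2 ≤ (Cs * S) ^ 2 * ∑' i, x i ^ 2 := by
    calc ∑' i, mulVec G x i ^ 2 ≤ Cs ^ 2 * S * ∑' i, w i := h5
      _ ≤ Cs ^ 2 * S * (S * ∑' j, u j) := by
          apply mul_le_mul_of_nonneg_left hw_summ.2 (by positivity)
      _ = (Cs * S) ^ 2 * ∑' i, x i ^ 2 := by rw [hudef]; ring
  calc Real.sqrt (∑' i, mulVec G x i ^ 2)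
      ≤ Real.sqrt ((Cs * S) ^ 2 * ∑' i, x i ^ 2) := Real.sqrt_le_sqrt h6
    _ = Cs * S * Real.sqrt (∑' i, x i ^ 2) := by
        rw [Real.sqrt_mul (sq_nonneg _), Real.sqrt_sq (by positivity)]

/-- for an elliptic bounded Jaffard-class matrix, all finite sections are
invertible, the supremum matrix `M̄` of the absolute values of the entries of the
inverses of the finite sections has finite entries, lies in a Jaffard class `J(d,γ̃)`,
and induces a bounded operator on ℓ². -/
theorem jaffard_finite_section_inverses
    (d : ℕ → ℕ → ℝ) (hd : IsMetric d) (hsum : SummCond d)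
    (γ : ℝ) (hγ : 0 < γ) (M : Mat) (hJ : Jaffard d γ M)
    (hbdd : IsBoundedOp M)
    (Cell : ℝ) (hCell : 0 < Cell) (hell : Elliptic M Cell) :
    (∀ N : ℕ, IsUnit (sect M N)) ∧
    (∀ i j : ℕ, BddAbove (Set.range fun k : {m : ℕ // max i j < m} =>
      |(sect M k.1)⁻¹ ⟨i, lt_of_le_of_lt (le_max_left i j) k.2⟩
          ⟨j, lt_of_le_of_lt (le_max_right i j) k.2⟩|)) ∧
    ∃ γ' : ℝ, 0 < γ' ∧ Jaffard d γ' (Mbar M) ∧ IsBoundedOp (Mbar M) := by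
  obtain ⟨hd0, hdeq, hdsym, hdtri⟩ := hd
  obtain ⟨K₀, hK₀0, hb₀⟩ := hbdd
  set K : ℝ := max K₀ Cell + 1 with hKdef
  have hK₀K : K₀ ≤ K := by
    have := le_max_left K₀ Cell; rw [hKdef]; linarith
  have hCellK : Cell < K := by
    have := le_max_right K₀ Cell; rw [hKdef]; linarith
  have hK0 : (0:ℝ) ≤ K := by
    have := le_max_left K₀ Cell; rw [hKdef]; linarith
  have hbK : BoundedWith M K := by
    intro x hx
    obtain ⟨h1, h2, h3⟩ := hb₀ x hx
    exact ⟨h1, h2, le_trans h3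
      (mul_le_mul_of_nonneg_right hK₀K (Real.sqrt_nonneg _))⟩
  obtain ⟨C, hC0, hCb⟩ := hJ (γ / 2) (by linarith) (by linarith)
  obtain ⟨S₀, hS₀⟩ := hsum (γ / 4) (by linarith)
  set S : ℝ := max S₀ 1 with hSdef
  have hS1 : 1 ≤ S := le_max_right _ _
  -- uniform bound for all sections
  have hmain : ∀ N : ℕ, IsUnit (sect M N) ∧ ∀ i j : Fin N,
      |(sect M N)⁻¹ i j| ≤ JLCs Cell K C S *
        Real.exp (-(JLγ Cell K C S (γ / 2)) * d i j) := by
    intro N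
    apply finmat_inv_bound (sect M N) (fun i j : Fin N => d i j) Cell K C S (γ / 2)
      hCell hCellK hC0 (by linarith) hS1
    · exact fun i j => hd0 i j
    · exact fun i => (hdeq (i : ℕ) i).mpr rfl
    · exact fun i j k => hdtri i k j
    · exact fun x => sect_elliptic M Cell hell x
    · exact fun x => sect_bounded M K hK0 hbK x
    · exact fun i j => hCb i j
    · intro i
      have heq : γ / 2 / 2 = γ / 4 := by ring
      rw [heq]
      calc ∑ k : Fin N, Real.exp (-(γ / 4) * d i k)
          = ∑ k ∈ Finset.range N, Real.exp (-(γ / 4) * d i k) :=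
            Fin.sum_univ_eq_sum_range (fun k => Real.exp (-(γ / 4) * d i k)) N
        _ ≤ ∑' k, Real.exp (-(γ / 4) * d i k) :=
            Summable.sum_le_tsum _ (fun k _ => (Real.exp_pos _).le) (hS₀ i).1
        _ ≤ S₀ := (hS₀ i).2
        _ ≤ S := le_max_left _ _
  set Cs : ℝ := JLCs Cell K C S with hCsdef
  set γt : ℝ := JLγ Cell K C S (γ / 2) with hγtdef
  obtain ⟨-, -, -, -, hθpos, -, -, -, hCspos⟩ := JL_props hCell hCellK hC0 hS1
  have hγt0 : 0 < γt := by
    rw [hγtdef, JLγ]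
    have : 0 < γ / 2 / 2 := by linarith
    exact mul_pos hθpos this
  -- pointwise bound on Mbar entries
  have hMval : ∀ (i j : ℕ) (k : {m : ℕ // max i j < m}),
      |(sect M k.1)⁻¹ ⟨i, lt_of_le_of_lt (le_max_left i j) k.2⟩
        ⟨j, lt_of_le_of_lt (le_max_right i j) k.2⟩| ≤ Cs * Real.exp (-γt * d i j) := by
    intro i j k
    exact (hmain k.1).2 ⟨i, lt_of_le_of_lt (le_max_left i j) k.2⟩
      ⟨j, lt_of_le_of_lt (le_max_right i j) k.2⟩
  have hbdd_ab : ∀ i j : ℕ, BddAbove (Set.range fun k : {m : ℕ // max i j < m} =>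
      |(sect M k.1)⁻¹ ⟨i, lt_of_le_of_lt (le_max_left i j) k.2⟩
          ⟨j, lt_of_le_of_lt (le_max_right i j) k.2⟩|) := by
    intro i j
    refine ⟨Cs * Real.exp (-γt * d i j), ?_⟩
    rintro y ⟨k, rfl⟩
    exact hMval i j k
  have hne : ∀ i j : ℕ, Nonempty {m : ℕ // max i j < m} :=
    fun i j => ⟨⟨max i j + 1, lt_add_one _⟩⟩
  have hMbar_le : ∀ i j : ℕ, Mbar M i j ≤ Cs * Real.exp (-γt * d i j) := by
    intro i j
    have := hne i j
    exact ciSup_le fun k => hMval i j k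
  have hMbar_nonneg : ∀ i j : ℕ, 0 ≤ Mbar M i j := by
    intro i j
    obtain ⟨k⟩ := hne i j
    exact le_trans (abs_nonneg _) (le_ciSup (hbdd_ab i j) k)
  have hMbar_abs : ∀ i j : ℕ, |Mbar M i j| ≤ Cs * Real.exp (-γt * d i j) := by
    intro i j
    rw [abs_of_nonneg (hMbar_nonneg i j)]
    exact hMbar_le i j
  refine ⟨fun N => (hmain N).1, hbdd_ab, γt, hγt0, ?_, ?_⟩
  · -- Jaffard class
    intro γ'' h0 hlt
    refine ⟨Cs, hCspos, fun i j => ?_⟩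
    calc |Mbar M i j| ≤ Cs * Real.exp (-γt * d i j) := hMbar_abs i j
      _ ≤ Cs * Real.exp (-γ'' * d i j) := by
          apply mul_le_mul_of_nonneg_left _ hCspos.le
          apply Real.exp_le_exp.mpr
          have := hd0 i j
          nlinarith
  · -- boundedness via Schur test
    obtain ⟨S₁, hS₁⟩ := hsum γt hγt0
    exact schur_bounded d ⟨hd0, hdeq, hdsym, hdtri⟩ γt S₁ hγt0 hS₁ Cs hCspos
      (Mbar M) hMbar_abs
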